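/- Up to scalar, the Klein quartic is the only invariant quartic: every homogeneous polynomial g ∈ ℂ[v₁, v₂, v₃] of degree 4 satisfying g∘P = g, g∘D = g and g∘T = g is a scalar multiple of f = v₁³v₂ + v₂³v₃ + v₃³v₁. -/

import Mathlib

noncomputable section

open MvPolynomial

/-- `ε = exp(2πi/7)`. -/
noncomputable def ε : ℂ := Complex.exp (2 * Real.pi * Complex.I / 7)

noncomputable def lam₁ : ℂ := ε - ε ^ 6
noncomputable def lam₂ : ℂ := ε ^ 4 - ε ^ 3
noncomputable def lam₃ : ℂ := ε ^ 2 - ε ^ 5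

/-- The Klein quartic f = v₁³v₂ + v₂³v₃ + v₃³v₁ (with v₁ = X 0, v₂ = X 1, v₃ = X 2). -/
noncomputable def fklein : MvPolynomial (Fin 3) ℂ :=
  X 0 ^ 3 * X 1 + X 1 ^ 3 * X 2 + X 2 ^ 3 * X 0

/-- The cyclic substitution P : (v₁, v₂, v₃) ↦ (v₂, v₃, v₁). -/
noncomputable def Psub : Fin 3 → MvPolynomial (Fin 3) ℂ := ![X 1, X 2, X 0]

/-- The diagonal substitution D : (v₁, v₂, v₃) ↦ (ε v₁, ε⁴ v₂, ε² v₃). -/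
noncomputable def Dsub : Fin 3 → MvPolynomial (Fin 3) ℂ :=
  ![ε • X 0, (ε ^ 4) • X 1, (ε ^ 2) • X 2]

/-- The substitution T given by the symmetric matrix (i/√7)·(λ's). -/
noncomputable def Tsub : Fin 3 → MvPolynomial (Fin 3) ℂ :=
  ![(Complex.I / (Real.sqrt 7 : ℂ)) • (lam₁ • X 0 + lam₃ • X 1 + lam₂ • X 2),
    (Complex.I / (Real.sqrt 7 : ℂ)) • (lam₃ • X 0 + lam₂ • X 1 + lam₁ • X 2),
    (Complex.I / (Real.sqrt 7 : ℂ)) • (lam₂ • X 0 + lam₁ • X 1 + lam₃ • X 2)]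

/-- helper: Finsupp prod over Fin 3 as explicit product -/
lemma prod_X_pow (v : Fin 3 →₀ ℕ) :
    (v.prod fun n e => (X n : MvPolynomial (Fin 3) ℂ) ^ e)
      = X 0 ^ v 0 * X 1 ^ v 1 * X 2 ^ v 2 := by
  rw [Finsupp.prod_fintype _ _ (fun i => pow_zero _), Fin.prod_univ_three]

lemma hε_prim : IsPrimitiveRoot ε 7 := by
  have := Complex.isPrimitiveRoot_exp 7 (by norm_num)
  simpa [ε] using this

lemma aeval_Dsub_monomial (u : Fin 3 →₀ ℕ) (c : ℂ) :
    aeval Dsub (monomial u c) = monomial u (ε ^ (u 0 + 4 * u 1 + 2 * u 2) * c) := by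
  rw [monomial_eq, monomial_eq]
  simp only [prod_X_pow]
  have h1 : ε ^ (u 0 + 4 * u 1 + 2 * u 2)
      = ε ^ u 0 * (ε ^ 4) ^ u 1 * (ε ^ 2) ^ u 2 := by
    rw [pow_add, pow_add, pow_mul, pow_mul]
  simp only [map_mul, map_pow, aeval_X, aeval_C, Dsub, algebraMap_eq,
    Matrix.cons_val_zero, Matrix.cons_val_one, Matrix.head_cons,
    Matrix.cons_val_two, Matrix.tail_cons, smul_eq_C_mul, h1, C_mul, C_pow, mul_pow]
  ring

lemma coeff_aeval_Dsub (g : MvPolynomial (Fin 3) ℂ) (u : Fin 3 →₀ ℕ) :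
    coeff u (aeval Dsub g) = ε ^ (u 0 + 4 * u 1 + 2 * u 2) * coeff u g := by
  induction g using MvPolynomial.induction_on' with
  | monomial u' c =>
    rw [aeval_Dsub_monomial, coeff_monomial, coeff_monomial]
    split_ifs with h
    · subst h; rfl
    · ring
  | add p q hp hq => rw [map_add, coeff_add, hp, hq, coeff_add, mul_add]

/-- the exponent permutation induced by P -/
def pmap (u : Fin 3 →₀ ℕ) : Fin 3 →₀ ℕ :=
  Finsupp.equivFunOnFinite.symm ![u 2, u 0, u 1]

@[simp] lemma pmap_apply_zero (u : Fin 3 →₀ ℕ) : pmap u 0 = u 2 := rfl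
@[simp] lemma pmap_apply_one (u : Fin 3 →₀ ℕ) : pmap u 1 = u 0 := rfl
@[simp] lemma pmap_apply_two (u : Fin 3 →₀ ℕ) : pmap u 2 = u 1 := rfl

lemma pmap_inj : Function.Injective pmap := by
  intro u v h
  ext i
  fin_cases i
  · have := congrArg (fun w => w (1 : Fin 3)) h; simpa using this
  · have := congrArg (fun w => w (2 : Fin 3)) h; simpa using this
  · have := congrArg (fun w => w (0 : Fin 3)) h; simpa using this

lemma aeval_Psub_monomial (u : Fin 3 →₀ ℕ) (c : ℂ) :
    aeval Psub (monomial u c) = monomial (pmap u) c := by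
  rw [monomial_eq, monomial_eq]
  simp only [prod_X_pow]
  simp only [map_mul, map_pow, aeval_X, aeval_C, Psub, algebraMap_eq,
    Matrix.cons_val_zero, Matrix.cons_val_one, Matrix.head_cons,
    Matrix.cons_val_two, Matrix.tail_cons,
    pmap_apply_zero, pmap_apply_one, pmap_apply_two]
  ring

lemma coeff_aeval_Psub (g : MvPolynomial (Fin 3) ℂ) (u : Fin 3 →₀ ℕ) :
    coeff (pmap u) (aeval Psub g) = coeff u g := by
  induction g using MvPolynomial.induction_on' with
  | monomial u' c =>
    rw [aeval_Psub_monomial, coeff_monomial, coeff_monomial]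
    congr 1
    simp only [eq_iff_iff]
    exact ⟨fun h => pmap_inj h, fun h => by rw [h]⟩
  | add p q hp hq => rw [map_add, coeff_add, hp, hq, coeff_add]

def m₁ : Fin 3 →₀ ℕ := Finsupp.equivFunOnFinite.symm ![3, 1, 0]
def m₂ : Fin 3 →₀ ℕ := Finsupp.equivFunOnFinite.symm ![0, 3, 1]
def m₃ : Fin 3 →₀ ℕ := Finsupp.equivFunOnFinite.symm ![1, 0, 3]

@[simp] lemma m₁_zero : m₁ 0 = 3 := rfl
@[simp] lemma m₁_one : m₁ 1 = 1 := rfl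
@[simp] lemma m₁_two : m₁ 2 = 0 := rfl
@[simp] lemma m₂_zero : m₂ 0 = 0 := rfl
@[simp] lemma m₂_one : m₂ 1 = 3 := rfl
@[simp] lemma m₂_two : m₂ 2 = 1 := rfl
@[simp] lemma m₃_zero : m₃ 0 = 1 := rfl
@[simp] lemma m₃_one : m₃ 1 = 0 := rfl
@[simp] lemma m₃_two : m₃ 2 = 3 := rfl

lemma fklein_eq : fklein = monomial m₁ 1 + monomial m₂ 1 + monomial m₃ 1 := by
  rw [monomial_eq, monomial_eq, monomial_eq]
  simp only [prod_X_pow]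
  simp only [m₁_zero, m₁_one, m₁_two, m₂_zero, m₂_one, m₂_two, m₃_zero, m₃_one, m₃_two,
    map_one, fklein]
  ring

/-- up to scalar, the Klein quartic is the only invariant
quartic: every homogeneous polynomial of degree 4 invariant under P, D and T
is a scalar multiple of f. -/
theorem klein_quartic_unique_invariant (g : MvPolynomial (Fin 3) ℂ)
    (hg : g.IsHomogeneous 4)
    (hP : aeval Psub g = g) (hD : aeval Dsub g = g) (hT : aeval Tsub g = g) :
    ∃ a : ℂ, g = a • fklein := by
  -- coefficients vanish away from the allowed weights
  have hDc : ∀ u : Fin 3 →₀ ℕ, ¬ (7 ∣ (u 0 + 4 * u 1 + 2 * u 2)) → coeff u g = 0 := by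
    intro u hu
    have h1 : coeff u g = ε ^ (u 0 + 4 * u 1 + 2 * u 2) * coeff u g := by
      conv_lhs => rw [← hD]
      exact coeff_aeval_Dsub g u
    have h2 : ε ^ (u 0 + 4 * u 1 + 2 * u 2) ≠ 1 := fun h =>
      hu ((hε_prim.pow_eq_one_iff_dvd _).mp h)
    have h3 : (ε ^ (u 0 + 4 * u 1 + 2 * u 2) - 1) * coeff u g = 0 := by
      linear_combination -h1
    rcases mul_eq_zero.mp h3 with h4 | h4
    · exact absurd (by linear_combination h4) h2
    · exact h4
  have hdeg : ∀ u : Fin 3 →₀ ℕ, u.degree = u 0 + u 1 + u 2 := by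
    intro u
    unfold Finsupp.degree
    show ∑ i ∈ u.support, u i = _
    rw [Finset.sum_subset (Finset.subset_univ _)
      (fun i _ hi => Finsupp.notMem_support_iff.mp hi), Fin.sum_univ_three]
  set a := coeff m₁ g with ha
  have hp1 : pmap m₁ = m₂ := by
    ext i; fin_cases i <;> rfl
  have hp2 : pmap m₂ = m₃ := by
    ext i; fin_cases i <;> rfl
  have hc2 : coeff m₂ g = a := by
    have h := coeff_aeval_Psub g m₁
    rw [hp1, hP] at h
    exact h
  have hc3 : coeff m₃ g = a := by
    have h := coeff_aeval_Psub g m₂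
    rw [hp2, hP] at h
    rw [h, hc2]
  have hne12 : m₂ ≠ m₁ := fun h => by
    have := congrArg (fun w : Fin 3 →₀ ℕ => w 0) h; simp at this
  have hne13 : m₃ ≠ m₁ := fun h => by
    have := congrArg (fun w : Fin 3 →₀ ℕ => w 1) h; simp at this
  have hne21 : m₁ ≠ m₂ := fun h => hne12 h.symm
  have hne23 : m₃ ≠ m₂ := fun h => by
    have := congrArg (fun w : Fin 3 →₀ ℕ => w 0) h; simp at this
  have hne31 : m₁ ≠ m₃ := fun h => hne13 h.symm
  have hne32 : m₂ ≠ m₃ := fun h => hne23 h.symm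
  refine ⟨a, ?_⟩
  ext u
  rw [fklein_eq]
  simp only [coeff_smul, coeff_add, coeff_monomial, smul_eq_mul]
  by_cases h4 : u 0 + u 1 + u 2 = 4
  · have hwin : (u 0 = 3 ∧ u 1 = 1 ∧ u 2 = 0) ∨ (u 0 = 0 ∧ u 1 = 3 ∧ u 2 = 1) ∨
        (u 0 = 1 ∧ u 1 = 0 ∧ u 2 = 3) ∨ ¬ (7 ∣ (u 0 + 4 * u 1 + 2 * u 2)) := by
      by_cases hd : 7 ∣ (u 0 + 4 * u 1 + 2 * u 2)
      · have hb : u 1 ≤ 4 := by omega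
        interval_cases h : (u 1) <;> omega
      · exact Or.inr (Or.inr (Or.inr hd))
    rcases hwin with h | h | h | h
    · have hu : u = m₁ := by
        ext i; fin_cases i
        · simpa using h.1
        · simpa using h.2.1
        · simpa using h.2.2
      subst hu
      simp [hne12, hne13, ha]
    · have hu : u = m₂ := by
        ext i; fin_cases i
        · simpa using h.1
        · simpa using h.2.1
        · simpa using h.2.2
      subst hu
      simp [hne21, hne23, hc2]
    · have hu : u = m₃ := by
        ext i; fin_cases i
        · simpa using h.1
        · simpa using h.2.1
        · simpa using h.2.2
      subst hu
      simp [hne31, hne32, hc3]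
    · have hz : coeff u g = 0 := hDc u h
      have h1 : m₁ ≠ u := fun he => h (by rw [← he]; norm_num)
      have h2 : m₂ ≠ u := fun he => h (by rw [← he]; norm_num)
      have h3 : m₃ ≠ u := fun he => h (by rw [← he]; norm_num)
      simp [hz, h1, h2, h3]
  · have hz : coeff u g = 0 := hg.coeff_eq_zero (by rw [hdeg u]; exact h4)
    have h1 : m₁ ≠ u := fun he => h4 (by rw [← he]; norm_num)
    have h2 : m₂ ≠ u := fun he => h4 (by rw [← he]; norm_num)
    have h3 : m₃ ≠ u := fun he => h4 (by rw [← he]; norm_num)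
    simp [hz, h1, h2, h3]

end
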